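/- In the tree space E of Definition 3.1, if every F_σ (σ ∈ [T]) is reflexive, then the set Φ = ⋃_{σ∈[T]} B_{E_σ} is weakly compact in E, where E_σ consists of elements supported by the branch σ. -/

import Mathlib

/-- The initial segment of length `n` of an infinite sequence `σ`. -/
def initSeg {Λ : Type*} (σ : ℕ → Λ) (n : ℕ) : List Λ := List.ofFn (fun i : Fin n => σ i)

/-- `σ` is an infinite branch of the (unrooted) tree `T`. -/
def IsBranch {Λ : Type*} (T : Set (List Λ)) (σ : ℕ → Λ) : Prop :=
  ∀ n : ℕ, initSeg σ (n + 1) ∈ T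

/-- `η ⊂ σ`: `η` is an initial segment of `σ`. -/
def IsInitOf {Λ : Type*} (η : List Λ) (σ : ℕ → Λ) : Prop := η = initSeg σ η.length

open Filter Topology

namespace Stmt11Aux

variable {Λ : Type*}

lemma initSeg_length (σ : ℕ → Λ) (n : ℕ) : (initSeg σ n).length = n := by
  simp [initSeg]

lemma initSeg_take (σ : ℕ → Λ) {m n : ℕ} (h : m ≤ n) :
    (initSeg σ n).take m = initSeg σ m := by
  apply List.ext_getElem
  · simp [initSeg]; omega
  · intro i h1 h2
    simp [initSeg]

lemma initSeg_prefix (σ : ℕ → Λ) {m n : ℕ} (h : m ≤ n) :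
    initSeg σ m <+: initSeg σ n := by
  rw [← initSeg_take σ h]; exact List.take_prefix _ _

lemma isInitOf_comparable {η ν : List Λ} {σ : ℕ → Λ} (hη : IsInitOf η σ) (hν : IsInitOf ν σ) :
    η <+: ν ∨ ν <+: η := by
  rcases le_total η.length ν.length with h | h
  · left; rw [hη, hν]; exact initSeg_prefix σ h
  · right; rw [hη, hν]; exact initSeg_prefix σ h

lemma take_prefix_take_of_chain {η ν : List Λ} (hc : η <+: ν ∨ ν <+: η)
    {m n : ℕ} (hmn : m ≤ n) (hn : n ≤ ν.length) :
    η.take m <+: ν.take n := by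
  rcases hc with h | h
  · exact (h.take m).trans (by rw [List.take_isPrefix_take]; left; exact hmn)
  · have hν : ν.take n = η.take n := by
      conv_lhs => rw [List.prefix_iff_eq_take.mp h]
      rw [List.take_take]
      congr 1
      omega
    rw [hν, List.take_isPrefix_take]
    left; exact hmn

open Classical in
noncomputable def buildL (T S : Set (List Λ)) (d : Λ) : ℕ → List Λ
  | 0 => []
  | n + 1 =>
    if h : ∃ η ∈ S, n + 1 ≤ η.length then h.choose.take (n + 1)
    else
      buildL T S d n ++
        [if h2 : ∃ a, buildL T S d n ++ [a] ∈ T then h2.choose else d]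

lemma buildL_length (T S : Set (List Λ)) (d : Λ) : ∀ n, (buildL T S d n).length = n
  | 0 => rfl
  | n + 1 => by
    rw [buildL]
    split_ifs with h
    · have := h.choose_spec.2
      simp only [List.length_take]
      omega
    · simp [buildL_length T S d n]
    · simp [buildL_length T S d n]

lemma buildL_mem {T S : Set (List Λ)} {d : Λ}
    (hST : S ⊆ T)
    (htree : ∀ l ∈ T, ∀ l' : List Λ, l' ≠ [] → l' <+: l → l' ∈ T)
    (hext : ∀ l : List Λ, (l = [] ∨ l ∈ T) → ∃ a, l ++ [a] ∈ T) :
    ∀ n, buildL T S d n = [] ∨ buildL T S d n ∈ T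
  | 0 => Or.inl rfl
  | n + 1 => by
    by_cases h : ∃ η ∈ S, n + 1 ≤ η.length
    · rw [buildL, dif_pos h]
      right
      obtain ⟨hS, hlen⟩ := h.choose_spec
      refine htree _ (hST hS) _ ?_ (List.take_prefix _ _)
      intro hnil
      have := congrArg List.length hnil
      simp only [List.length_take, List.length_nil] at this
      omega
    · have h2 : ∃ a, buildL T S d n ++ [a] ∈ T :=
        hext _ (buildL_mem hST htree hext n)
      rw [buildL, dif_neg h, dif_pos h2]
      exact Or.inr h2.choose_spec

lemma buildL_prefix_succ {T S : Set (List Λ)} {d : Λ}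
    (hchain : ∀ η ∈ S, ∀ ν ∈ S, η <+: ν ∨ ν <+: η) (n : ℕ) :
    buildL T S d n <+: buildL T S d (n + 1) := by
  by_cases h : ∃ η ∈ S, n + 1 ≤ η.length
  swap
  · conv_rhs => rw [buildL, dif_neg h]
    exact List.prefix_append _ _
  conv_rhs => rw [buildL, dif_pos h]
  · obtain ⟨hS2, hlen2⟩ := h.choose_spec
    match n with
    | 0 => exact List.nil_prefix
    | m + 1 =>
      have h' : ∃ η ∈ S, m + 1 ≤ η.length := ⟨h.choose, hS2, by omega⟩
      rw [buildL, dif_pos h']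
      obtain ⟨hS1, hlen1⟩ := h'.choose_spec
      exact take_prefix_take_of_chain (hchain _ hS1 _ hS2) (by omega) hlen2

lemma buildL_prefix_le {T S : Set (List Λ)} {d : Λ}
    (hchain : ∀ η ∈ S, ∀ ν ∈ S, η <+: ν ∨ ν <+: η) {m n : ℕ} (h : m ≤ n) :
    buildL T S d m <+: buildL T S d n := by
  induction n with
  | zero => rw [Nat.le_zero.mp h]
  | succ k ih =>
    rcases Nat.lt_or_ge m (k + 1) with h' | h'
    · exact (ih (by omega)).trans (buildL_prefix_succ hchain k)
    · rw [Nat.le_antisymm h h']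

lemma buildL_eq_of_mem {T S : Set (List Λ)} {d : Λ}
    (hchain : ∀ η ∈ S, ∀ ν ∈ S, η <+: ν ∨ ν <+: η)
    {η : List Λ} (hη : η ∈ S) :
    buildL T S d η.length = η := by
  match hn : η.length with
  | 0 => exact (List.length_eq_zero_iff.mp hn).symm
  | m + 1 =>
    have h : ∃ ν ∈ S, m + 1 ≤ ν.length := ⟨η, hη, by omega⟩
    rw [buildL, dif_pos h]
    obtain ⟨hS', hlen'⟩ := h.choose_spec
    rcases hchain _ hS' _ hη with hc | hc
    · have h1 : h.choose.length ≤ m + 1 := by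
        have := hc.length_le; omega
      have h2 : h.choose = η := hc.eq_of_length (by omega)
      rw [h2]
      exact List.take_of_length_le (by omega)
    · have h3 := List.prefix_iff_eq_take.mp hc
      rw [hn] at h3
      exact h3.symm

/-- Build an infinite branch of `T` through all elements of a chain `S ⊆ T`. -/
lemma exists_branch {T S : Set (List Λ)}
    (hTne : T.Nonempty) (hT0 : ∀ l ∈ T, l ≠ ([] : List Λ))
    (htree : ∀ l ∈ T, ∀ l' : List Λ, l' ≠ [] → l' <+: l → l' ∈ T)
    (hpruned : ∀ l ∈ T, ∃ a : Λ, l ++ [a] ∈ T)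
    (hST : S ⊆ T)
    (hchain : ∀ η ∈ S, ∀ ν ∈ S, η <+: ν ∨ ν <+: η) :
    ∃ σ : ℕ → Λ, IsBranch T σ ∧ ∀ η ∈ S, IsInitOf η σ := by
  have hext : ∀ l : List Λ, (l = [] ∨ l ∈ T) → ∃ a, l ++ [a] ∈ T := by
    rintro l (rfl | hl)
    · obtain ⟨l₀, hl₀⟩ := hTne
      match l₀, hT0 l₀ hl₀, hl₀ with
      | a :: t, _, hl₀ =>
        exact ⟨a, by simpa using htree _ hl₀ [a] (by simp) ⟨t, rfl⟩⟩
    · exact hpruned l hl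
  obtain ⟨d, _⟩ : ∃ _ : Λ, True := by
    obtain ⟨l₀, hl₀⟩ := hTne
    match l₀, hT0 l₀ hl₀ with
    | a :: t, _ => exact ⟨a, trivial⟩
  set σ : ℕ → Λ := fun k => (buildL T S d (k + 1)).getD k d with hσ
  have hIS : ∀ n, initSeg σ n = buildL T S d n := by
    intro n
    apply List.ext_getElem
    · rw [initSeg_length, buildL_length]
    · intro i h1 h2
      rw [initSeg_length] at h1
      have hpre : buildL T S d (i + 1) <+: buildL T S d n :=
        buildL_prefix_le hchain (by omega)
      have hi1 : i < (buildL T S d (i + 1)).length := by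
        rw [buildL_length]; omega
      simp only [initSeg, List.getElem_ofFn, hσ]
      rw [List.getD_eq_getElem _ _ hi1]
      exact hpre.getElem hi1
  refine ⟨σ, ?_, ?_⟩
  · intro n
    rw [hIS]
    rcases buildL_mem hST htree hext (n + 1) with h | h
    · have := congrArg List.length h
      rw [buildL_length] at this
      simp at this
    · exact h
  · intro η hη
    rw [IsInitOf, hIS, buildL_eq_of_mem hchain hη]

end Stmt11Aux

open Stmt11Aux NormedSpace

theorem stmt11 {Λ : Type*} [Countable Λ] [DecidableEq Λ]
    (T : Set (List Λ)) (hTne : T.Nonempty)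
    (hT0 : ∀ l ∈ T, l ≠ ([] : List Λ))
    (htree : ∀ l ∈ T, ∀ l' : List Λ, l' ≠ [] → l' <+: l → l' ∈ T)
    (hpruned : ∀ l ∈ T, ∃ a : Λ, l ++ [a] ∈ T)
    {E : Type*} [NormedAddCommGroup E] [NormedSpace ℝ E] [CompleteSpace E]
    (e : List Λ → E) (coord : List Λ → E →L[ℝ] ℝ)
    (hbiorth : ∀ η ∈ T, ∀ ν ∈ T, coord η (e ν) = if η = ν then (1 : ℝ) else 0)
    (Tn : ℕ → Finset (List Λ))
    (hTnsub : ∀ n, ↑(Tn n) ⊆ T) (hTnmono : Monotone Tn)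
    (hTnunion : ∀ η ∈ T, ∃ n, η ∈ Tn n)
    (Q : ℕ → E →L[ℝ] E)
    (hQ : ∀ (n : ℕ) (x : E), Q n x = ∑ η ∈ Tn n, coord η x • e η)
    (hQnorm : ∀ n, ‖Q n‖ ≤ 1)
    (hbasis : ∀ x : E, Filter.Tendsto (fun n => Q n x) Filter.atTop (nhds x))
    (hshrinking : (Submodule.span ℝ
        (Set.range fun η : {l : List Λ // l ∈ T} =>
          (coord η.1 : StrongDual ℝ E))).topologicalClosure = ⊤)
    (Eσ : (ℕ → Λ) → Set E)
    (hEσ : ∀ σ : ℕ → Λ, Eσ σ = {x : E | ∀ η ∈ T, ¬ IsInitOf η σ → coord η x = 0})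
    (hrefl : ∀ σ : ℕ → Λ, IsBranch T σ →
      IsCompact (toWeakSpace ℝ E '' (Eσ σ ∩ Metric.closedBall 0 1))) :
    IsCompact (toWeakSpace ℝ E ''
      (⋃ σ ∈ {σ : ℕ → Λ | IsBranch T σ}, Eσ σ ∩ Metric.closedBall 0 1)) := by
  classical
  set W := toWeakSpace ℝ E with hW
  set Φ : Set E := ⋃ σ ∈ {σ : ℕ → Λ | IsBranch T σ}, Eσ σ ∩ Metric.closedBall 0 1 with hΦ
  rw [isCompact_iff_ultrafilter_le_nhds]
  intro f hf
  rw [le_principal_iff] at hf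
  set u : Ultrafilter E := f.map (W.symm : WeakSpace ℝ E → E) with hu
  have hΦu : Φ ∈ u := by
    rw [hu, Ultrafilter.mem_map]
    have : (W.symm : WeakSpace ℝ E → E) ⁻¹' Φ = W '' Φ := by
      ext w
      constructor
      · intro hw
        exact ⟨W.symm w, hw, W.apply_symm_apply w⟩
      · rintro ⟨a, ha, rfl⟩
        simpa [W.symm_apply_apply] using ha
    rw [this]
    exact hf
  -- boundedness on Φ
  have hb : ∀ a ∈ Φ, ‖a‖ ≤ 1 := by
    intro a ha
    rw [hΦ] at ha
    simp only [Set.mem_iUnion] at ha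
    obtain ⟨σ', -, -, haball⟩ := ha
    exact mem_closedBall_zero_iff.mp haball
  -- coordinatewise limits
  have hy0 : ∀ η : List Λ, ∃ c : ℝ, Filter.Tendsto (fun a => coord η a) u (nhds c) := by
    intro η
    have hmem : ↑(u.map (fun a => coord η a)) ≤
        Filter.principal (Set.Icc (-‖coord η‖) ‖coord η‖) := by
      rw [le_principal_iff, Ultrafilter.coe_map, Filter.mem_map]
      refine Filter.mem_of_superset hΦu ?_
      intro a ha
      have h1 : |coord η a| ≤ ‖coord η‖ := by
        calc |coord η a| = ‖coord η a‖ := rfl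
          _ ≤ ‖coord η‖ * ‖a‖ := (coord η).le_opNorm a
          _ ≤ ‖coord η‖ * 1 := by
              have := hb a ha
              nlinarith [norm_nonneg (coord η)]
          _ = ‖coord η‖ := mul_one _
      have := abs_le.mp h1
      exact Set.mem_Icc.mpr this
    obtain ⟨c, -, hc⟩ := isCompact_Icc.ultrafilter_le_nhds _ hmem
    exact ⟨c, hc⟩
  choose y hy using hy0
  -- support is a chain
  set S : Set (List Λ) := {η | η ∈ T ∧ y η ≠ 0} with hS
  have hST : S ⊆ T := fun η h => h.1
  have hzero : ∀ η : List Λ, {a : E | coord η a = 0} ∈ u → y η = 0 := by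
    intro η hmem
    have h1 : Filter.Tendsto (fun a => coord η a) u (nhds 0) := by
      refine Filter.Tendsto.congr' ?_ tendsto_const_nhds
      filter_upwards [hmem] with a ha
      exact ha.symm
    exact tendsto_nhds_unique (hy η) h1
  have hchain : ∀ η ∈ S, ∀ ν ∈ S, η <+: ν ∨ ν <+: η := by
    intro η hη ν hν
    by_contra hcon
    push_neg at hcon
    have key : Φ ⊆ {a : E | coord η a = 0} ∪ {a : E | coord ν a = 0} := by
      intro a ha
      rw [hΦ] at ha
      simp only [Set.mem_iUnion] at ha
      obtain ⟨σ', hσ', haσ, -⟩ := ha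
      by_contra hc2
      simp only [Set.mem_union, Set.mem_setOf_eq] at hc2
      push_neg at hc2
      have haσ' := (hEσ σ') ▸ haσ
      have h1 : IsInitOf η σ' := by
        by_contra h
        exact hc2.1 (haσ' η hη.1 h)
      have h2 : IsInitOf ν σ' := by
        by_contra h
        exact hc2.2 (haσ' ν hν.1 h)
      rcases isInitOf_comparable h1 h2 with h | h
      · exact hcon.1 h
      · exact hcon.2 h
    rcases Ultrafilter.union_mem_iff.mp (Filter.mem_of_superset hΦu key) with h | h
    · exact hη.2 (hzero η h)
    · exact hν.2 (hzero ν h)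
  -- the branch through the support
  obtain ⟨σ, hσbranch, hσcover⟩ := exists_branch hTne hT0 htree hpruned hST hchain
  -- the candidate limit: cluster point of the truncated sums
  set z : ℕ → E := fun n => ∑ η ∈ Tn n, y η • e η with hz
  have hcz : ∀ η ∈ T, ∀ n, coord η (z n) = if η ∈ Tn n then y η else 0 := by
    intro η hη n
    rw [hz]
    simp only [map_sum, ContinuousLinearMap.map_smul]
    have : ∀ ν ∈ Tn n, y ν • coord η (e ν) = if η = ν then y ν else 0 := by
      intro ν hν
      rw [hbiorth η hη ν (hTnsub n hν)]
      split_ifs <;> simp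
    rw [Finset.sum_congr rfl this, Finset.sum_ite_eq]
  have hzEσ : ∀ n, z n ∈ Eσ σ := by
    intro n
    rw [hEσ]
    intro η hη hni
    rw [hcz η hη n]
    split_ifs with hmem
    · by_contra hne
      exact hni (hσcover η ⟨hη, hne⟩)
    · rfl
  have hzlim : ∀ n, Filter.Tendsto (fun a => Q n a) u (nhds (z n)) := by
    intro n
    have heq : (fun a : E => Q n a) = fun a => ∑ η ∈ Tn n, coord η a • e η :=
      funext (hQ n)
    rw [heq, hz]
    exact tendsto_finset_sum _ (fun η _ => (hy η).smul_const (e η))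
  have hznorm : ∀ n, ‖z n‖ ≤ 1 := by
    intro n
    refine le_of_tendsto (hzlim n).norm ?_
    refine Filter.mem_of_superset hΦu ?_
    intro a ha
    have h1 : ‖Q n a‖ ≤ ‖Q n‖ * ‖a‖ := (Q n).le_opNorm a
    have h2 := hQnorm n
    have h3 := hb a ha
    have h4 := norm_nonneg (Q n)
    have h5 := norm_nonneg a
    show ‖Q n a‖ ≤ 1
    nlinarith
  -- cluster point of (z n) in the weakly compact branch ball
  have hK : IsCompact (W '' (Eσ σ ∩ Metric.closedBall 0 1)) := hrefl σ hσbranch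
  have hzK : ∀ n, W (z n) ∈ W '' (Eσ σ ∩ Metric.closedBall 0 1) := fun n =>
    ⟨z n, ⟨hzEσ n, mem_closedBall_zero_iff.mpr (hznorm n)⟩, rfl⟩
  have hcl : ∃ w ∈ W '' (Eσ σ ∩ Metric.closedBall 0 1),
      ClusterPt w (Filter.map (fun n => W (z n)) Filter.atTop) := by
    refine hK.exists_clusterPt ?_
    rw [le_principal_iff, Filter.mem_map]
    exact Filter.univ_mem' hzK
  obtain ⟨w, hwmem, hwcl⟩ := hcl
  obtain ⟨x, hxmem, rfl⟩ := hwmem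
  -- coordinates of x
  have hcoordW : ∀ η : List Λ, Continuous (fun ξ : WeakSpace ℝ E => coord η (W.symm ξ)) :=
    fun η => WeakBilin.eval_continuous ((topDualPairing ℝ E).flip) (coord η)
  have hcoordx : ∀ η ∈ T, coord η x = y η := by
    intro η hη
    -- eventually, coord η (z n) = y η
    have hev : Filter.Tendsto (fun n => coord η (z n)) Filter.atTop (nhds (y η)) := by
      obtain ⟨N, hN⟩ := hTnunion η hη
      have hevq : ∀ᶠ n in Filter.atTop, coord η (z n) = y η := by
        filter_upwards [Filter.eventually_ge_atTop N] with n hn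
        rw [hcz η hη n, if_pos (hTnmono hn hN)]
      exact Filter.Tendsto.congr' (hevq.mono fun n h => h.symm) tendsto_const_nhds
    have hcl2 : ClusterPt (coord η (W.symm (W x)))
        (Filter.map (fun n => coord η (z n)) Filter.atTop) := by
      refine hwcl.map (f := fun ξ : WeakSpace ℝ E => coord η (W.symm ξ)) (hcoordW η).continuousAt ?_
      rw [Filter.tendsto_map'_iff]
      apply Filter.tendsto_map.congr
      intro n
      exact (congrArg (coord η) (W.symm_apply_apply (z n))).symm
    rw [W.symm_apply_apply] at hcl2
    haveI : (Filter.map (fun n => coord η (z n)) Filter.atTop).NeBot :=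
      Filter.map_neBot
    have hle : Filter.map (fun n => coord η (z n)) Filter.atTop ≤ nhds (y η) := hev
    exact eq_of_nhds_neBot (hcl2.mono hle)
  -- x belongs to Φ
  have hxΦ : x ∈ Φ := by
    rw [hΦ]
    exact Set.mem_biUnion hσbranch hxmem
  have hx1 : ‖x‖ ≤ 1 := mem_closedBall_zero_iff.mp hxmem.2
  -- injectivity of the dual pairing
  have hinj : Function.Injective ⇑((topDualPairing ℝ E).flip) := by
    intro a b hab
    rw [NormedSpace.eq_iff_forall_dual_eq ℝ]
    intro g
    have := LinearMap.congr_fun hab g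
    simpa [topDualPairing_apply] using this
  -- convergence against functionals in the span of the coordinates
  have hspan : ∀ ψ : StrongDual ℝ E,
      ψ ∈ Submodule.span ℝ (Set.range fun η : {l : List Λ // l ∈ T} =>
          (coord η.1 : StrongDual ℝ E)) →
      Filter.Tendsto (fun a => ψ a) u (nhds (ψ x)) := by
    intro ψ hψ
    induction hψ using Submodule.span_induction with
    | mem ψ' h =>
      obtain ⟨η, rfl⟩ := h
      have h1 := hy η.1
      rw [← hcoordx η.1 η.2] at h1
      exact h1
    | zero => simpa using tendsto_const_nhds
    | add a b ha hb iha ihb =>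
      simp only [ContinuousLinearMap.add_apply]
      exact iha.add ihb
    | smul c a ha iha =>
      simp only [ContinuousLinearMap.coe_smul', Pi.smul_apply, smul_eq_mul]
      exact iha.const_mul c
  have hb' : ∀ᶠ a in (u : Filter E), ‖a‖ ≤ 1 := Filter.mem_of_superset hΦu hb
  -- convergence against all functionals, by density
  have hφall : ∀ φ : StrongDual ℝ E,
      Filter.Tendsto (fun a => φ a) u (nhds (φ x)) := by
    intro φ
    rw [Metric.tendsto_nhds]
    intro ε hε
    have hφcl : φ ∈ closure ((Submodule.span ℝ
        (Set.range fun η : {l : List Λ // l ∈ T} =>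
          (coord η.1 : StrongDual ℝ E)) :
            Submodule ℝ (StrongDual ℝ E)) : Set _) := by
      rw [← Submodule.topologicalClosure_coe, hshrinking]
      trivial
    rw [Metric.mem_closure_iff] at hφcl
    obtain ⟨ψ, hψmem, hψd⟩ := hφcl (ε/4) (by linarith)
    rw [dist_eq_norm] at hψd
    have h2 : ∀ᶠ a in (u : Filter E), |ψ a - ψ x| < ε/4 := by
      have := Metric.tendsto_nhds.mp (hspan ψ hψmem) (ε/4) (by linarith)
      simpa [Real.dist_eq] using this
    filter_upwards [h2, hb'] with a hψa hna
    rw [Real.dist_eq]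
    have e1 : |φ a - ψ a| ≤ ε/4 := by
      have h3 := (φ - ψ).le_opNorm a
      simp only [ContinuousLinearMap.sub_apply, Real.norm_eq_abs] at h3
      have h4 : ‖φ - ψ‖ * ‖a‖ ≤ ε/4 := by nlinarith [norm_nonneg (φ - ψ), norm_nonneg a]
      exact le_trans h3 h4
    have e2 : |φ x - ψ x| ≤ ε/4 := by
      have h3 := (φ - ψ).le_opNorm x
      simp only [ContinuousLinearMap.sub_apply, Real.norm_eq_abs] at h3
      have h4 : ‖φ - ψ‖ * ‖x‖ ≤ ε/4 := by nlinarith [norm_nonneg (φ - ψ), norm_nonneg x]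
      exact le_trans h3 h4
    have e3 : |ψ x - φ x| ≤ ε/4 := by rw [abs_sub_comm]; exact e2
    calc |φ a - φ x| = |(φ a - ψ a) + ((ψ a - ψ x) + (ψ x - φ x))| := by congr 1; ring
      _ ≤ |φ a - ψ a| + |(ψ a - ψ x) + (ψ x - φ x)| := abs_add_le _ _
      _ ≤ |φ a - ψ a| + (|ψ a - ψ x| + |ψ x - φ x|) := by
          gcongr
          exact abs_add_le _ _
      _ < ε := by linarith
  -- conclude
  refine ⟨W x, ⟨x, hxΦ, rfl⟩, ?_⟩
  have hfW : (f : Filter (WeakSpace ℝ E)) = Filter.map (⇑W) u := by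
    rw [hu, Ultrafilter.coe_map, Filter.map_map]
    have hWW : (⇑W ∘ ⇑W.symm) = id := by
      funext ξ
      exact W.apply_symm_apply ξ
    rw [hWW, Filter.map_id]
  rw [hfW]
  have hfin : Filter.Tendsto (fun a : E => W a) u (nhds (W x)) := by
    refine (WeakBilin.tendsto_iff_forall_eval_tendsto ((topDualPairing ℝ E).flip) hinj).mpr ?_
    intro φ
    exact hφall φ
  exact hfin
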